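/- arXiv:2505.23676 — 2 statements merged into one kernel-verified Lean document; each statement's English description precedes it below -/
import Mathlib

section
/- Let E be a real inner product space, let v, w ∈ E, let λ* ∈ [0,1] be a minimizer over [0,1] of φ(λ) = ‖λv + (1−λ)w‖², and set v̄ = λ*v + (1−λ*)w. Let c₁ ∈ (0,1] and suppose u ∈ E satisfies ⟨u, v̄⟩ < c₁‖v̄‖². Then there is no λ ∈ [0,1] such that u = λv + (1−λ)w; that is, u does not lie on the segment joining w and v. -/
open RealInnerProductSpace

/-- If `λ*` minimizes `φ(λ) = ‖λ•v + (1-λ)•w‖²` over `[0,1]`, `v̄ = λ*•v + (1-λ*)•w`,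
`c₁ ∈ (0,1]` and `⟪u, v̄⟫ < c₁‖v̄‖²`, then `u` is not a convex combination of `v` and `w`. -/
theorem new_subgradient_not_on_segment
    {E : Type*} [NormedAddCommGroup E] [InnerProductSpace ℝ E]
    (v w : E) (lamStar : ℝ) (hlam : lamStar ∈ Set.Icc (0 : ℝ) 1)
    (hmin : ∀ lam ∈ Set.Icc (0 : ℝ) 1,
      ‖lamStar • v + (1 - lamStar) • w‖ ^ 2 ≤ ‖lam • v + (1 - lam) • w‖ ^ 2)
    (vbar : E) (hvbar : vbar = lamStar • v + (1 - lamStar) • w)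
    (c₁ : ℝ) (hc₁ : c₁ ∈ Set.Ioc (0 : ℝ) 1)
    (u : E) (hu : ⟪u, vbar⟫ < c₁ * ‖vbar‖ ^ 2) :
    ¬ ∃ lam ∈ Set.Icc (0 : ℝ) 1, u = lam • v + (1 - lam) • w := by
  rintro ⟨lam, hl, hue⟩
  obtain ⟨hl0, hl1⟩ := hl
  obtain ⟨hs0, hs1⟩ := hlam
  obtain ⟨hc0, hcle⟩ := hc₁
  set a : ℝ := ⟪vbar, u - vbar⟫ with ha
  set b : ℝ := ‖u - vbar‖ ^ 2 with hb
  -- key: for t ∈ [0,1], ‖vbar‖² ≤ ‖vbar + t•(u-vbar)‖² = ‖vbar‖² + 2ta + t²b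
  have key : ∀ t : ℝ, t ∈ Set.Icc (0:ℝ) 1 → 0 ≤ 2 * t * a + t ^ 2 * b := by
    intro t ⟨ht0, ht1⟩
    set μ : ℝ := (1 - t) * lamStar + t * lam with hμ
    have hμIcc : μ ∈ Set.Icc (0:ℝ) 1 := by
      constructor <;> nlinarith
    have heq : μ • v + (1 - μ) • w = vbar + t • (u - vbar) := by
      rw [hvbar, hue]
      match_scalars <;> ring
    have h := hmin μ hμIcc
    rw [heq] at h
    rw [← hvbar] at h
    have hexp : ‖vbar + t • (u - vbar)‖ ^ 2
        = ‖vbar‖ ^ 2 + 2 * (t * a) + t ^ 2 * b := by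
      rw [norm_add_sq_real, real_inner_smul_right, norm_smul]
      rw [ha, hb]
      rw [mul_pow]
      simp [Real.norm_eq_abs, sq_abs]
    rw [hexp] at h
    nlinarith
  have hanneg : 0 ≤ a := by
    by_contra hneg
    push_neg at hneg
    have hbpos : 0 < b := by
      rcases eq_or_ne u vbar with h | h
      · exfalso
        rw [ha, h, sub_self, inner_zero_right] at hneg
        exact lt_irrefl 0 hneg
      · have h' : u - vbar ≠ 0 := sub_ne_zero.mpr h
        rw [hb]
        exact pow_pos (norm_pos_iff.mpr h') 2
    set t : ℝ := min 1 (-a / b) with ht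
    have ht0 : 0 < t := by
      exact lt_min one_pos (div_pos (by linarith) hbpos)
    have ht1 : t ≤ 1 := min_le_left _ _
    have htb : t * b ≤ -a := by
      have : t ≤ -a / b := min_le_right _ _
      calc t * b ≤ (-a / b) * b := by nlinarith
        _ = -a := by field_simp
    have h := key t ⟨le_of_lt ht0, ht1⟩
    nlinarith
  -- now ⟪u, vbar⟫ = a + ‖vbar‖² ≥ ‖vbar‖² ≥ c₁‖vbar‖²
  have hinner : ⟪u, vbar⟫ = a + ‖vbar‖ ^ 2 := by
    rw [ha, real_inner_comm, inner_sub_right, real_inner_self_eq_norm_sq]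
    ring
  nlinarith [sq_nonneg ‖vbar‖]
end

section
/- Let E be a real inner product space, let c₁ ∈ (0,1) and C₁ > 0, and let v, w ∈ E satisfy ‖v‖ ≤ C₁, ‖w‖ ≤ C₁ and ⟨v, w⟩ ≤ c₁‖w‖². Then the infimum over λ ∈ [0,1] of ‖λv + (1−λ)w‖² is at most (1 − ((1−c₁)‖w‖/(2C₁))²) · ‖w‖². -/
open RealInnerProductSpace

/-- Contraction estimate: if `‖v‖ ≤ C₁`, `‖w‖ ≤ C₁` and `⟪v, w⟫ ≤ c₁‖w‖²` with
`c₁ ∈ (0,1)`, `C₁ > 0`, then the infimum over `λ ∈ [0,1]` of `‖λ•v + (1-λ)•w‖²`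
is at most `(1 - ((1-c₁)‖w‖/(2C₁))²)‖w‖²`. -/
theorem aggregate_contraction_estimate
    {E : Type*} [NormedAddCommGroup E] [InnerProductSpace ℝ E]
    (c₁ C₁ : ℝ) (hc₁ : c₁ ∈ Set.Ioo (0 : ℝ) 1) (hC₁ : 0 < C₁)
    (v w : E) (hv : ‖v‖ ≤ C₁) (hw : ‖w‖ ≤ C₁) (hvw : ⟪v, w⟫ ≤ c₁ * ‖w‖ ^ 2) :
    sInf ((fun lam : ℝ => ‖lam • v + (1 - lam) • w‖ ^ 2) '' Set.Icc (0 : ℝ) 1) ≤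
      (1 - ((1 - c₁) * ‖w‖ / (2 * C₁)) ^ 2) * ‖w‖ ^ 2 := by
  obtain ⟨hc0, hc1⟩ := hc₁
  set lam₀ : ℝ := (1 - c₁) * ‖w‖ ^ 2 / (2 * C₁) ^ 2 with hlam₀
  have hC₁' : (0:ℝ) < (2 * C₁) ^ 2 := by positivity
  have h1c : (0:ℝ) < 1 - c₁ := by linarith
  have hwn : (0:ℝ) ≤ ‖w‖ := norm_nonneg w
  have hlam0 : 0 ≤ lam₀ := by positivity
  have hw2 : ‖w‖ ^ 2 ≤ C₁ ^ 2 := by nlinarith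
  have hlam1 : lam₀ ≤ 1 := by
    rw [hlam₀, div_le_one hC₁']
    nlinarith
  -- bound ‖v - w‖ ≤ 2C₁
  have hvwnorm : ‖v - w‖ ≤ 2 * C₁ := by
    calc ‖v - w‖ ≤ ‖v‖ + ‖w‖ := norm_sub_le v w
    _ ≤ 2 * C₁ := by linarith
  have hvwsq : ‖v - w‖ ^ 2 ≤ (2 * C₁) ^ 2 := by
    nlinarith [norm_nonneg (v - w)]
  -- expansion
  have hexp : ‖lam₀ • v + (1 - lam₀) • w‖ ^ 2
      = lam₀ ^ 2 * ‖v - w‖ ^ 2 + 2 * lam₀ * ⟪v - w, w⟫ + ‖w‖ ^ 2 := by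
    have : lam₀ • v + (1 - lam₀) • w = lam₀ • (v - w) + w := by
      rw [smul_sub, sub_smul, one_smul]; abel
    rw [this, norm_add_sq_real, norm_smul, real_inner_smul_left]
    simp [mul_pow, abs_of_nonneg hlam0]
    ring
  have hinner : ⟪v - w, w⟫ ≤ -(1 - c₁) * ‖w‖ ^ 2 := by
    rw [inner_sub_left, real_inner_self_eq_norm_sq]
    linarith
  -- value bound
  have hval : ‖lam₀ • v + (1 - lam₀) • w‖ ^ 2
      ≤ (1 - ((1 - c₁) * ‖w‖ / (2 * C₁)) ^ 2) * ‖w‖ ^ 2 := by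
    rw [hexp]
    have h1 : lam₀ ^ 2 * ‖v - w‖ ^ 2 ≤ lam₀ ^ 2 * (2 * C₁) ^ 2 := by
      apply mul_le_mul_of_nonneg_left hvwsq (by positivity)
    have h2 : 2 * lam₀ * ⟪v - w, w⟫ ≤ 2 * lam₀ * (-(1 - c₁) * ‖w‖ ^ 2) := by
      apply mul_le_mul_of_nonneg_left hinner (by positivity)
    have key : lam₀ ^ 2 * (2 * C₁) ^ 2 + 2 * lam₀ * (-(1 - c₁) * ‖w‖ ^ 2) + ‖w‖ ^ 2
        = (1 - ((1 - c₁) * ‖w‖ / (2 * C₁)) ^ 2) * ‖w‖ ^ 2 := by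
      rw [hlam₀]
      field_simp
      ring
    linarith
  refine le_trans (csInf_le ?_ ?_) hval
  · exact ⟨0, by rintro x ⟨lam, _, rfl⟩; positivity⟩
  · exact ⟨lam₀, ⟨hlam0, hlam1⟩, rfl⟩
end
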